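/- Let k ≥ 1 be a natural number and let Y be a metric space containing no line, i.e., there is no map γ : ℝ → Y with dist(γ s, γ t) = |s − t| for all real s, t. Let X be the ℓ²-product of EuclideanSpace ℝ (Fin k) and Y, i.e., the product space with distance dist((v,y),(w,z)) = sqrt(dist(v,w)² + dist(y,z)²). Then every surjective isometry φ : X → X splits as a product: there exist a surjective isometry g of EuclideanSpace ℝ (Fin k) and a surjective isometry h of Y such that φ(v,y) = (g v, h y) for all v and y. In particular the isometry group of X embeds into Iso(ℝ^k) × Iso(Y). -/

import Mathlib

open ENNReal

private lemma sq_eq_of_nonneg {x y : ℝ} (hx : 0 ≤ x) (hy : 0 ≤ y) (h : x ^ 2 = y ^ 2) :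
    x = y := by
  have := sq_eq_sq_iff_abs_eq_abs x y |>.mp h
  rwa [abs_of_nonneg hx, abs_of_nonneg hy] at this

private lemma sq_le_of_nonneg {x y : ℝ} (hx : 0 ≤ x) (hy : 0 ≤ y) (h : x ^ 2 ≤ y ^ 2) :
    x ≤ y := by nlinarith

private lemma dist_sq_prodL2 {α β : Type*} [PseudoMetricSpace α] [PseudoMetricSpace β]
    (x y : WithLp 2 (α × β)) :
    dist x y ^ 2 = dist x.fst y.fst ^ 2 + dist x.snd y.snd ^ 2 := by
  rw [WithLp.prod_dist_eq_add (by norm_num)]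
  have h1 : (0:ℝ) ≤ dist x.fst y.fst ^ ((2:ℝ≥0∞).toReal) + dist x.snd y.snd ^ ((2:ℝ≥0∞).toReal) := by
    positivity
  rw [← Real.rpow_natCast (_ ^ (1 / (2:ℝ≥0∞).toReal)) 2, ← Real.rpow_mul h1]
  norm_num

/-- A line in the `ℓ²`-product of two metric spaces, with `Y` containing no line,
has constant second component. -/
private lemma line_snd_const {A Y : Type*} [PseudoMetricSpace A] [MetricSpace Y]
    (hY : ¬ ∃ γ : ℝ → Y, ∀ s t : ℝ, dist (γ s) (γ t) = |s - t|)
    (γ : ℝ → WithLp 2 (A × Y)) (hγ : ∀ s t : ℝ, dist (γ s) (γ t) = |s - t|) :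
    ∀ s t : ℝ, (γ s).snd = (γ t).snd := by
  set a : ℝ → ℝ → ℝ := fun s t => dist (γ s).fst (γ t).fst with ha
  set b : ℝ → ℝ → ℝ := fun s t => dist (γ s).snd (γ t).snd with hb
  have ann : ∀ s t, 0 ≤ a s t := fun s t => dist_nonneg
  have bnn : ∀ s t, 0 ≤ b s t := fun s t => dist_nonneg
  have pyth : ∀ s t : ℝ, a s t ^ 2 + b s t ^ 2 = (t - s) ^ 2 := by
    intro s t
    have h1 := dist_sq_prodL2 (γ s) (γ t)
    rw [hγ s t] at h1
    simp only [ha, hb]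
    rw [← h1, sq_abs]; ring_nf
  -- key step for an adjacent triple
  have step : ∀ s t u : ℝ, s < t → t < u →
      b s u = b s t + b t u ∧ a s t * b t u = b s t * a t u := by
    intro s t u hst htu
    have p1 := pyth s t
    have p2 := pyth t u
    have p3 := pyth s u
    have trA : a s u ≤ a s t + a t u := dist_triangle _ _ _
    have trB : b s u ≤ b s t + b t u := dist_triangle _ _ _
    have h1 : (0:ℝ) < t - s := by linarith
    have h2 : (0:ℝ) < u - t := by linarith
    -- Cauchy–Schwarz
    have cs : a s t * a t u + b s t * b t u ≤ (t - s) * (u - t) := by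
      nlinarith [sq_nonneg (a s t * b t u - b s t * a t u), ann s t, ann t u, bnn s t, bnn t u,
        mul_nonneg (ann s t) (ann t u), mul_nonneg (bnn s t) (bnn t u), mul_pos h1 h2]
    -- reverse inequality from triangle inequality in the product
    have cs' : (t - s) * (u - t) ≤ a s t * a t u + b s t * b t u := by
      nlinarith [ann s u, bnn s u, ann s t, ann t u, bnn s t, bnn t u, trA, trB,
        mul_nonneg (ann s u) (ann s u)]
    have cseq : a s t * a t u + b s t * b t u = (t - s) * (u - t) := le_antisymm cs cs'
    have par : a s t * b t u = b s t * a t u := by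
      have hz : (a s t * b t u - b s t * a t u) ^ 2 = 0 := by nlinarith [cseq]
      have := pow_eq_zero_iff (n := 2) (by norm_num) |>.mp hz
      linarith [sub_eq_zero.mp this]
    refine ⟨?_, par⟩
    -- additivity of b
    have hBsq : (b s t + b t u) ^ 2 ≤ b s u ^ 2 := by
      nlinarith [trA, ann s u, ann s t, ann t u]
    have : b s t + b t u ≤ b s u :=
      sq_le_of_nonneg (by positivity) (bnn s u) hBsq
    linarith
  have badd : ∀ s t u : ℝ, s < t → t < u → b s u = b s t + b t u :=
    fun s t u h1 h2 => (step s t u h1 h2).1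
  have adj : ∀ s t u : ℝ, s < t → t < u → b s t * (u - t) = b t u * (t - s) := by
    intro s t u hst htu
    have par := (step s t u hst htu).2
    have p1 := pyth s t
    have p2 := pyth t u
    have hsq : (b s t * (u - t)) ^ 2 = (b t u * (t - s)) ^ 2 := by
      linear_combination (b t u)^2 * p1 - (b s t)^2 * p2 - (a s t * b t u + b s t * a t u) * par
    exact sq_eq_of_nonneg (mul_nonneg (bnn s t) (by linarith))
      (mul_nonneg (bnn t u) (by linarith)) hsq
  have rat : ∀ p x y : ℝ, p < x → x < y → b p y * (x - p) = b p x * (y - p) := by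
    intro p x y h1 h2
    have hA := badd p x y h1 h2
    have hB := adj p x y h1 h2
    linear_combination (x - p) * hA - hB
  have ratp : ∀ p x y : ℝ, p < x → p < y → b p x * (y - p) = b p y * (x - p) := by
    intro p x y h1 h2
    rcases lt_trichotomy x y with h | h | h
    · exact (rat p x y h1 h).symm
    · rw [h]
    · exact rat p y x h2 h
  set c : ℝ := b 0 1 with hc
  have lin : ∀ s u : ℝ, s < u → b s u = c * (u - s) := by
    intro s u hsu
    set p : ℝ := min s 0 - 1 with hp
    have hps : p < s := by
      have h := min_le_left s 0; rw [hp]; linarith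
    have hp0 : p < 0 := by
      have h := min_le_right s 0; rw [hp]; linarith
    have hp1 : p < 1 := by linarith
    have hpu : p < u := by linarith
    have hpne : p ≠ 0 := ne_of_lt hp0
    have e1 := ratp p 0 1 hp0 hp1
    have a1 := badd p 0 1 hp0 (by norm_num)
    have h0 : b p 0 = c * (0 - p) := by linear_combination e1 - p * a1
    have e2 := ratp p 0 s hp0 hps
    have h2 : b p s = c * (s - p) := by
      have h2' : b p s * p = c * (s - p) * p := by linear_combination e2 - (s - p) * h0
      exact mul_right_cancel₀ hpne h2'
    have e3 := ratp p 0 u hp0 hpu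
    have h3 : b p u = c * (u - p) := by
      have h3' : b p u * p = c * (u - p) * p := by linear_combination e3 - (u - p) * h0
      exact mul_right_cancel₀ hpne h3'
    have a2 := badd p s u hps hsu
    linear_combination h3 - h2 - a2
  have bsym : ∀ s t, b s t = b t s := fun s t => dist_comm _ _
  have blin : ∀ s t : ℝ, b s t = c * |t - s| := by
    intro s t
    rcases lt_trichotomy s t with h | h | h
    · rw [lin s t h, abs_of_pos (by linarith)]
    · subst h; rw [sub_self, abs_zero, mul_zero]; exact dist_self _
    · rw [bsym, lin t s h, abs_of_neg (by linarith)]; ring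
  have hc0 : c = 0 := by
    by_contra hcne
    have hcpos : 0 < c := lt_of_le_of_ne (bnn 0 1) (Ne.symm hcne)
    apply hY
    refine ⟨fun r => (γ (r / c)).snd, fun s t => ?_⟩
    have hb1 : dist (γ (s / c)).snd (γ (t / c)).snd = b (s / c) (t / c) := rfl
    rw [hb1, blin (s / c) (t / c),
      show t / c - s / c = (t - s) / c by ring, abs_div, abs_of_pos hcpos,
      mul_comm, div_mul_cancel₀ _ (ne_of_gt hcpos), abs_sub_comm]
  intro s t
  have : b s t = 0 := by rw [blin, hc0, zero_mul]
  exact dist_eq_zero.mp this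

section Main

variable {k : ℕ} {Y : Type*} [MetricSpace Y]

private noncomputable def emkP {α β : Type*} (v : α) (y : β) : WithLp 2 (α × β) :=
  (WithLp.equiv 2 (α × β)).symm (v, y)

private lemma emkP_fst {α β : Type*} (v : α) (y : β) : (emkP v y).fst = v := rfl
private lemma emkP_snd {α β : Type*} (v : α) (y : β) : (emkP v y).snd = y := rfl
private lemma emkP_eta {α β : Type*} (x : WithLp 2 (α × β)) : emkP x.fst x.snd = x := rfl

/-- The second component of the image of `(v, y)` under an isometry of the product
does not depend on `v`. -/
private lemma isometry_snd_indep
    (hY : ¬ ∃ γ : ℝ → Y, ∀ s t : ℝ, dist (γ s) (γ t) = |s - t|)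
    (ψ : WithLp 2 (EuclideanSpace ℝ (Fin k) × Y) →
      WithLp 2 (EuclideanSpace ℝ (Fin k) × Y))
    (hψ : Isometry ψ) (v w : EuclideanSpace ℝ (Fin k)) (y : Y) :
    (ψ (emkP v y)).snd = (ψ (emkP w y)).snd := by
  by_cases hvw : v = w
  · rw [hvw]
  · set d : ℝ := ‖w - v‖ with hd
    have hd0 : 0 < d := norm_pos_iff.mpr (sub_ne_zero.mpr (Ne.symm hvw))
    set u : EuclideanSpace ℝ (Fin k) := d⁻¹ • (w - v) with hu'
    have hu : ‖u‖ = 1 := by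
      rw [hu', norm_smul, Real.norm_eq_abs, abs_of_pos (inv_pos.mpr hd0), ← hd,
        inv_mul_cancel₀ (ne_of_gt hd0)]
    set L : ℝ → WithLp 2 (EuclideanSpace ℝ (Fin k) × Y) :=
      fun s => emkP (v + s • u) y with hL'
    have hL : ∀ s t : ℝ, dist (L s) (L t) = |s - t| := by
      intro s t
      have h1 := dist_sq_prodL2 (L s) (L t)
      have e1 : (L s).fst = v + s • u := rfl
      have e2 : (L t).fst = v + t • u := rfl
      have e3 : (L s).snd = y := rfl
      have e4 : (L t).snd = y := rfl
      rw [e1, e2, e3, e4, dist_self, dist_eq_norm,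
        show (v + s • u) - (v + t • u) = (s - t) • u by rw [sub_smul]; abel,
        norm_smul, Real.norm_eq_abs, hu, mul_one] at h1
      have h2 : dist (L s) (L t) ^ 2 = |s - t| ^ 2 := by rw [h1]; ring
      exact sq_eq_of_nonneg dist_nonneg (abs_nonneg _) h2
    have hline := line_snd_const hY (fun s => ψ (L s))
      (fun s t => by rw [hψ.dist_eq, hL])
    have h0 : L 0 = emkP v y := by
      rw [hL']; simp
    have hdd : L d = emkP w y := by
      rw [hL']
      simp only
      congr 1
      rw [hu', smul_smul, mul_inv_cancel₀ (ne_of_gt hd0), one_smul]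
      abel
    have := hline 0 d
    rw [h0, hdd] at this
    exact this

private lemma snd_dist_le {α β : Type*} [PseudoMetricSpace α] [PseudoMetricSpace β]
    (x y : WithLp 2 (α × β)) : dist x.snd y.snd ≤ dist x y := by
  have h := dist_sq_prodL2 x y
  exact sq_le_of_nonneg dist_nonneg dist_nonneg (by nlinarith [sq_nonneg (dist x.fst y.fst)])

end Main

/-- **Splitting of isometries of `ℝ^k ×₂ Y` when `Y` contains no line.**
If `Y` is a metric space containing no line (no isometric embedding of `ℝ`), and
`X` is the `ℓ²`-product of `EuclideanSpace ℝ (Fin k)` and `Y`, then every surjective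
isometry of `X` splits as a product of a surjective isometry of the Euclidean factor
and a surjective isometry of `Y`. -/
theorem isometry_prod_splits_of_no_line (k : ℕ) (hk : 1 ≤ k)
    (Y : Type*) [MetricSpace Y]
    (hY : ¬ ∃ γ : ℝ → Y, ∀ s t : ℝ, dist (γ s) (γ t) = |s - t|)
    (φ : WithLp 2 (EuclideanSpace ℝ (Fin k) × Y) →
      WithLp 2 (EuclideanSpace ℝ (Fin k) × Y))
    (hφ : Isometry φ) (hφsurj : Function.Surjective φ) :
    ∃ (g : EuclideanSpace ℝ (Fin k) → EuclideanSpace ℝ (Fin k)) (h : Y → Y),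
      Isometry g ∧ Function.Surjective g ∧ Isometry h ∧ Function.Surjective h ∧
      ∀ (v : EuclideanSpace ℝ (Fin k)) (y : Y),
        φ ((WithLp.equiv 2 (EuclideanSpace ℝ (Fin k) × Y)).symm (v, y)) =
          (WithLp.equiv 2 (EuclideanSpace ℝ (Fin k) × Y)).symm (g v, h y) := by
  classical
  rcases isEmpty_or_nonempty Y with hEmp | hNE
  · exact ⟨id, id, isometry_id, Function.surjective_id, isometry_id, Function.surjective_id,
      fun v y => isEmptyElim y⟩
  obtain ⟨y₀⟩ := hNE
  -- the inverse isometry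
  let eφ : WithLp 2 (EuclideanSpace ℝ (Fin k) × Y) ≃ WithLp 2 (EuclideanSpace ℝ (Fin k) × Y) :=
    Equiv.ofBijective φ ⟨hφ.injective, hφsurj⟩
  have heφ : ∀ x, eφ x = φ x := fun x => rfl
  have hψiso : Isometry eφ.symm := Isometry.of_dist_eq fun x y => by
    conv_rhs => rw [← eφ.apply_symm_apply x, ← eφ.apply_symm_apply y]
    rw [heφ, heφ, hφ.dist_eq]
  -- the factor maps
  set F : EuclideanSpace ℝ (Fin k) → Y → EuclideanSpace ℝ (Fin k) :=
    fun v y => (φ (emkP v y)).fst with hF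
  set h : Y → Y := fun y => (φ (emkP 0 y)).snd with hh
  set h' : Y → Y := fun z => (eφ.symm (emkP 0 z)).snd with hh'
  have φsnd : ∀ v y, (φ (emkP v y)).snd = h y := fun v y => isometry_snd_indep hY φ hφ v 0 y
  have ψsnd : ∀ v z, (eφ.symm (emkP v z)).snd = h' z :=
    fun v z => isometry_snd_indep hY eφ.symm hψiso v 0 z
  have φsplit : ∀ v y, φ (emkP v y) = emkP (F v y) (h y) := by
    intro v y
    calc φ (emkP v y) = emkP (φ (emkP v y)).fst (φ (emkP v y)).snd := rfl
      _ = emkP (F v y) (h y) := by rw [φsnd]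
  -- h ∘ h' and h' ∘ h are the identity
  have h'h : ∀ y, h' (h y) = y := by
    intro y
    have e1 : eφ.symm (φ (emkP 0 y)) = emkP 0 y := eφ.symm_apply_apply (emkP 0 y)
    rw [φsplit 0 y] at e1
    have e2 := ψsnd (F 0 y) (h y)
    rw [e1, emkP_snd] at e2
    exact e2.symm
  have hh'id : ∀ z, h (h' z) = z := by
    intro z
    have e1 : φ (eφ.symm (emkP 0 z)) = emkP 0 z := eφ.apply_symm_apply (emkP 0 z)
    have e3 : (φ (eφ.symm (emkP 0 z))).snd = h (h' z) := φsnd (eφ.symm (emkP 0 z)).fst (h' z)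
    rw [e1, emkP_snd] at e3
    exact e3.symm
  -- distance between fibers of h
  have hcont : ∀ (ψ : WithLp 2 (EuclideanSpace ℝ (Fin k) × Y) →
      WithLp 2 (EuclideanSpace ℝ (Fin k) × Y)), Isometry ψ →
      ∀ y z : Y, dist (ψ (emkP 0 y)).snd (ψ (emkP 0 z)).snd ≤ dist y z := by
    intro ψ hψ y z
    have h1 := snd_dist_le (ψ (emkP 0 y)) (ψ (emkP 0 z))
    rw [hψ.dist_eq] at h1
    have h2 : dist (emkP (0 : EuclideanSpace ℝ (Fin k)) y) (emkP 0 z) = dist y z := by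
      have := dist_sq_prodL2 (emkP (0 : EuclideanSpace ℝ (Fin k)) y) (emkP 0 z)
      rw [emkP_fst, emkP_fst, emkP_snd, emkP_snd, dist_self] at this
      exact sq_eq_of_nonneg dist_nonneg dist_nonneg (by rw [this]; ring)
    rw [h2] at h1
    exact h1
  have hiso : ∀ y z, dist (h y) (h z) = dist y z := by
    intro y z
    refine le_antisymm (hcont φ hφ y z) ?_
    have := hcont eφ.symm hψiso (h y) (h z)
    rw [show (eφ.symm (emkP 0 (h y))).snd = h' (h y) from rfl,
      show (eφ.symm (emkP 0 (h z))).snd = h' (h z) from rfl, h'h, h'h] at this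
    exact this
  have hIsoH : Isometry h := Isometry.of_dist_eq hiso
  have hSurjH : Function.Surjective h := fun z => ⟨h' z, hh'id z⟩
  -- the key metric identity
  have key : ∀ v w y z, dist (F v y) (F w z) ^ 2 + dist (h y) (h z) ^ 2
      = dist v w ^ 2 + dist y z ^ 2 := by
    intro v w y z
    have l := dist_sq_prodL2 (φ (emkP v y)) (φ (emkP w z))
    rw [hφ.dist_eq, φsnd, φsnd] at l
    have r := dist_sq_prodL2 (emkP v y) (emkP w z)
    rw [emkP_fst, emkP_fst, emkP_snd, emkP_snd] at r
    have hF1 : (φ (emkP v y)).fst = F v y := rfl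
    have hF2 : (φ (emkP w z)).fst = F w z := rfl
    rw [hF1, hF2] at l
    linarith
  -- F does not depend on the Y-coordinate
  have Find : ∀ v y z, F v y = F v z := by
    intro v y z
    have hk := key v v y z
    rw [hiso y z, dist_self] at hk
    have hz : dist (F v y) (F v z) ^ 2 = 0 := by linarith
    exact dist_eq_zero.mp ((pow_eq_zero_iff two_ne_zero).mp hz)
  set g : EuclideanSpace ℝ (Fin k) → EuclideanSpace ℝ (Fin k) := fun v => F v y₀ with hg
  have gIso : Isometry g := Isometry.of_dist_eq fun v w => by
    have hk := key v w y₀ y₀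
    rw [hiso, dist_self] at hk
    have e : dist (g v) (g w) = dist (F v y₀) (F w y₀) := rfl
    rw [e]
    exact sq_eq_of_nonneg dist_nonneg dist_nonneg (by linarith)
  have gSurj : Function.Surjective g := by
    intro w
    obtain ⟨x, hx⟩ := hφsurj (emkP w (h y₀))
    have e1 : (φ x).snd = h x.snd := by
      conv_lhs => rw [← emkP_eta x]
      exact φsnd x.fst x.snd
    have e2 : (φ x).snd = h y₀ := by rw [hx, emkP_snd]
    have hx2 : x.snd = y₀ := hIsoH.injective (e1.symm.trans e2)
    refine ⟨x.fst, ?_⟩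
    have e3 : g x.fst = (φ (emkP x.fst x.snd)).fst := by rw [hx2]
    rw [e3, emkP_eta, hx, emkP_fst]
  refine ⟨g, h, gIso, gSurj, hIsoH, hSurjH, ?_⟩
  intro v y
  have e := φsplit v y
  rw [Find v y y₀] at e
  exact e
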